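/- Let Ω ⊂ ℂ be a bounded open set which is the image of the open unit disk 𝔻 under some injective holomorphic map F : 𝔻 → ℂ. Let g : [0,1] → ℝ be continuous with g(0) = 0 < g(1), and define H on the closed unit disk by H(z) = g(|z|)·z/|z| for z ≠ 0 and H(0) = 0. If v₁ : Ω → ℝ is (Lebesgue) integrable with ∫_Ω v₁ dA > 0, then there exists an injective holomorphic map f : 𝔻 → ℂ with f(𝔻) = Ω such that ∫_Ω H(f⁻¹(x)) v₁(x) dA(x) = 0 as a complex number; equivalently, the real and imaginary parts of H ∘ f⁻¹ are both orthogonal to v₁ in L²(Ω). -/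

import Mathlib

open MeasureTheory Metric Set

noncomputable def Phi (a w : ℂ) : ℂ := (w - a) / (1 - (starRingEnd ℂ) a * w)

lemma den_ne (a w : ℂ) (ha : ‖a‖ ≤ 1) (hw : ‖w‖ < 1) :
    1 - (starRingEnd ℂ) a * w ≠ 0 := by
  intro h
  have h1 : (starRingEnd ℂ) a * w = 1 := by linear_combination -h
  have : ‖((starRingEnd ℂ) a * w)‖ < 1 := by
    rw [norm_mul, Complex.norm_conj]
    calc ‖a‖ * ‖w‖ ≤ 1 * ‖w‖ := by
          exact mul_le_mul_of_nonneg_right ha (norm_nonneg w)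
      _ < 1 := by simpa
  rw [h1] at this; simp at this

lemma normSq_key (a w : ℂ) :
    Complex.normSq (1 - (starRingEnd ℂ) a * w) - Complex.normSq (w - a)
      = (1 - Complex.normSq a) * (1 - Complex.normSq w) := by
  simp only [Complex.normSq_apply, Complex.sub_re, Complex.sub_im, Complex.mul_re,
    Complex.mul_im, Complex.conj_re, Complex.conj_im, Complex.one_re, Complex.one_im]
  ring

lemma phi_num_le (a w : ℂ) (ha : ‖a‖ ≤ 1) (hw : ‖w‖ < 1) :
    ‖(w - a)‖ ≤ ‖(1 - (starRingEnd ℂ) a * w)‖ := by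
  have h1 : Complex.normSq (w - a) ≤ Complex.normSq (1 - (starRingEnd ℂ) a * w) := by
    have h2 : (0:ℝ) ≤ (1 - Complex.normSq a) * (1 - Complex.normSq w) := by
      apply mul_nonneg
      · have : Complex.normSq a ≤ 1 := by
          rw [← Complex.sq_norm]; nlinarith [norm_nonneg a]
        linarith
      · have : Complex.normSq w ≤ 1 := by
          rw [← Complex.sq_norm]; nlinarith [norm_nonneg w]
        linarith
    nlinarith [normSq_key a w]
  rw [Complex.norm_def, Complex.norm_def]
  exact Real.sqrt_le_sqrt h1

lemma phi_abs_le (a w : ℂ) (ha : ‖a‖ ≤ 1) (hw : ‖w‖ < 1) :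
    ‖(Phi a w)‖ ≤ 1 := by
  rw [Phi, norm_div]
  have hd : ‖(1 - (starRingEnd ℂ) a * w)‖ ≠ 0 :=
    norm_ne_zero_iff.2 (den_ne a w ha hw)
  rw [div_le_one (lt_of_le_of_ne (norm_nonneg _) (Ne.symm hd))]
  exact phi_num_le a w ha hw

lemma phi_abs_lt (a w : ℂ) (ha : ‖a‖ < 1) (hw : ‖w‖ < 1) :
    ‖(Phi a w)‖ < 1 := by
  rw [Phi, norm_div]
  have hd : ‖(1 - (starRingEnd ℂ) a * w)‖ ≠ 0 :=
    norm_ne_zero_iff.2 (den_ne a w ha.le hw)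
  rw [div_lt_one (lt_of_le_of_ne (norm_nonneg _) (Ne.symm hd))]
  have h2 : (0:ℝ) < (1 - Complex.normSq a) * (1 - Complex.normSq w) := by
    apply mul_pos
    · have : Complex.normSq a < 1 := by
        rw [← Complex.sq_norm]; nlinarith [norm_nonneg a]
      linarith
    · have : Complex.normSq w < 1 := by
        rw [← Complex.sq_norm]; nlinarith [norm_nonneg w]
      linarith
  have h1 : Complex.normSq (w - a) < Complex.normSq (1 - (starRingEnd ℂ) a * w) := by
    nlinarith [normSq_key a w]
  rw [Complex.norm_def, Complex.norm_def]
  exact Real.sqrt_lt_sqrt (Complex.normSq_nonneg _) h1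

lemma phi_comp (a z : ℂ) (ha : ‖a‖ < 1) (hz : ‖z‖ < 1) :
    Phi a (Phi (-a) z) = z := by
  have hd1 : 1 - (starRingEnd ℂ) (-a) * z ≠ 0 := den_ne (-a) z (by simpa using ha.le) hz
  have hz' : ‖(Phi (-a) z)‖ < 1 := phi_abs_lt (-a) z (by simpa using ha) hz
  have hd2 : 1 - (starRingEnd ℂ) a * (Phi (-a) z) ≠ 0 := den_ne a _ ha.le hz'
  have hd1' : 1 + (starRingEnd ℂ) a * z ≠ 0 := by
    simpa [sub_neg_eq_add] using hd1
  simp only [Phi, map_neg, neg_mul, sub_neg_eq_add] at hd2 ⊢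
  rw [div_eq_iff hd2]
  have hu : (z + a) / (1 + (starRingEnd ℂ) a * z) * (1 + (starRingEnd ℂ) a * z) = z + a :=
    div_mul_cancel₀ _ hd1'
  linear_combination hu

lemma phi_boundary (a w : ℂ) (ha : ‖a‖ = 1) (hw : ‖w‖ < 1) :
    Phi a w = -a := by
  have hd : 1 - (starRingEnd ℂ) a * w ≠ 0 := den_ne a w ha.le hw
  have hca : a * (starRingEnd ℂ) a = 1 := by
    rw [Complex.mul_conj]
    norm_cast
    rw [Complex.normSq_eq_norm_sq, ha]; norm_num
  rw [Phi, div_eq_iff hd]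
  linear_combination -w * hca

-- continuity of H on closedBall
section Hcont
variable (g : ℝ → ℝ) (H : ℂ → ℂ)
  (hg : ContinuousOn g (Icc (0:ℝ) 1)) (hg0 : g 0 = 0)
  (hH : ∀ z : ℂ, z ≠ 0 → H z = (g (‖z‖) : ℂ) * z / (‖z‖ : ℂ))
  (hH0 : H 0 = 0)

include hg hg0 hH hH0 in
lemma H_contOn : ContinuousOn H (closedBall (0:ℂ) 1) := by
  intro z hz
  rcases eq_or_ne z 0 with rfl | hz0
  · -- continuity at 0
    rw [ContinuousWithinAt, hH0]
    have habs : Filter.Tendsto (fun w : ℂ => ‖w‖)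
        (nhdsWithin 0 (closedBall (0:ℂ) 1)) (nhdsWithin (‖(0:ℂ)‖) (Icc (0:ℝ) 1)) := by
      apply ContinuousWithinAt.tendsto_nhdsWithin continuous_norm.continuousWithinAt
      intro w hw
      simp only [mem_closedBall, Complex.dist_eq, sub_zero] at hw
      exact ⟨norm_nonneg w, hw⟩
    have hb : Filter.Tendsto (fun w : ℂ => |g (‖w‖)|)
        (nhdsWithin 0 (closedBall (0:ℂ) 1)) (nhds 0) := by
      have h1 : Filter.Tendsto (fun w : ℂ => g (‖w‖))
          (nhdsWithin 0 (closedBall (0:ℂ) 1)) (nhds (g (‖(0:ℂ)‖))) :=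
        (hg (‖(0:ℂ)‖) (by norm_num)).tendsto.comp habs
      have : g (‖(0:ℂ)‖) = 0 := by simpa using hg0
      rw [this] at h1
      simpa using h1.abs
    apply squeeze_zero_norm' _ hb
    apply Filter.Eventually.of_forall
    intro w
    rcases eq_or_ne w 0 with rfl | hw0
    · simp [hH0]
    · rw [hH w hw0]
      have hwa : ‖w‖ ≠ 0 := norm_ne_zero_iff.2 hw0
      rw [norm_div, norm_mul]
      simp only [Complex.norm_real, Real.norm_eq_abs, abs_norm]
      rw [mul_div_assoc, div_self hwa, mul_one]
  · have hfor : ∀ w ∈ closedBall (0:ℂ) 1, w ≠ 0 →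
        H w = (g (‖w‖) : ℂ) * w / (‖w‖ : ℂ) := fun w _ h => hH w h
    have hcont : ContinuousWithinAt
        (fun w => (g (‖w‖) : ℂ) * w / (‖w‖ : ℂ))
        (closedBall (0:ℂ) 1) z := by
      apply ContinuousWithinAt.div
      · apply ContinuousWithinAt.mul
        · apply Complex.continuous_ofReal.continuousAt.comp_continuousWithinAt
          apply (hg _ _).comp (continuous_norm.continuousWithinAt)
          · intro w hw
            simp only [mem_closedBall, Complex.dist_eq, sub_zero] at hw
            exact ⟨norm_nonneg w, hw⟩
          · simp only [mem_closedBall, Complex.dist_eq, sub_zero] at hz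
            exact ⟨norm_nonneg z, hz⟩
        · exact continuousWithinAt_id
      · exact Complex.continuous_ofReal.continuousAt.comp_continuousWithinAt
          continuous_norm.continuousWithinAt
      · simpa using hz0
    apply hcont.congr_of_eventuallyEq
    · filter_upwards [nhdsWithin_le_nhds (isOpen_ne.mem_nhds (by exact hz0 : z ≠ (0:ℂ)))]
        with w hw
      exact hH w hw
    · exact hH z hz0
end Hcont


lemma prod_telescope (f : ℕ → ℂ) (n : ℕ) (hf : ∀ k, k ≤ n → f k ≠ 0) :
    ∏ k ∈ Finset.range n, f (k+1) / f k = f n / f 0 := by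
  induction n with
  | zero => simp [div_self (hf 0 le_rfl)]
  | succ m ih =>
    rw [Finset.prod_range_succ, ih (fun k hk => hf k (hk.trans m.le_succ))]
    have h1 := hf m m.le_succ
    have h2 := hf 0 (Nat.zero_le _)
    field_simp

lemma exists_cont_log (M : ℂ → ℂ) (hM : ContinuousOn M (closedBall (0:ℂ) 1))
    (h0 : ∀ z ∈ closedBall (0:ℂ) 1, M z ≠ 0) :
    ∃ L : ℂ → ℂ, ContinuousOn L (closedBall (0:ℂ) 1) ∧
      ∀ z ∈ closedBall (0:ℂ) 1, Complex.exp (L z) = M z := by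
  have hcb : IsCompact (closedBall (0:ℂ) 1) := isCompact_closedBall _ _
  obtain ⟨z₀, hz₀, hmin⟩ := hcb.exists_isMinOn (⟨0, by simp⟩ : (closedBall (0:ℂ) 1).Nonempty)
    hM.norm
  set ε : ℝ := ‖M z₀‖ with hε
  have hεpos : 0 < ε := by
    rw [hε]; exact norm_pos_iff.2 (h0 z₀ hz₀)
  obtain ⟨δ, hδpos, hδ⟩ := Metric.uniformContinuousOn_iff.1
    (hcb.uniformContinuousOn_of_continuous hM) ε hεpos
  obtain ⟨n, hn⟩ := exists_nat_one_div_lt hδpos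
  set N : ℕ := n + 1 with hN
  have hNpos : (0:ℝ) < N := by positivity
  -- scaled points stay in the ball
  have hmem : ∀ (k : ℕ), k ≤ N → ∀ z ∈ closedBall (0:ℂ) 1,
      ((k:ℝ)/N : ℝ) • z ∈ closedBall (0:ℂ) 1 := by
    intro k hk z hz
    simp only [mem_closedBall, dist_zero_right] at hz ⊢
    rw [norm_smul, Real.norm_eq_abs, abs_of_nonneg (by positivity)]
    calc (k:ℝ)/N * ‖z‖ ≤ 1 * 1 := by
          apply mul_le_mul _ hz (norm_nonneg z) zero_le_one
          rw [div_le_one hNpos]; exact_mod_cast hk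
      _ = 1 := one_mul 1
  have hclose : ∀ (k : ℕ), k < N → ∀ z ∈ closedBall (0:ℂ) 1,
      dist (M ((((k:ℕ)+1:ℝ)/N : ℝ) • z)) (M (((k:ℝ)/N : ℝ) • z)) < ε := by
    intro k hk z hz
    have h1 : (((k:ℕ)+1:ℝ)/N : ℝ) • z ∈ closedBall (0:ℂ) 1 := by
      have := hmem (k+1) hk z hz
      push_cast at this ⊢; exact this
    have h2 : (((k:ℝ))/N : ℝ) • z ∈ closedBall (0:ℂ) 1 := hmem k hk.le z hz
    apply hδ _ h1 _ h2
    rw [dist_eq_norm, ← sub_smul]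
    have : ((k:ℝ)+1)/N - (k:ℝ)/N = 1/N := by field_simp; ring
    rw [this, norm_smul, Real.norm_eq_abs, abs_of_nonneg (by positivity)]
    calc 1/(N:ℝ) * ‖z‖ ≤ 1/N * 1 := by
          apply mul_le_mul_of_nonneg_left _ (by positivity)
          simpa [mem_closedBall, dist_zero_right] using hz
      _ = 1/N := mul_one _
      _ < δ := by rw [hN]; push_cast; exact hn
  -- the ratio is in the slit plane
  set r : ℕ → ℂ → ℂ := fun k z => M ((((k:ℕ)+1:ℝ)/N : ℝ) • z) / M (((k:ℝ)/N : ℝ) • z) with hr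
  have hrslit : ∀ (k : ℕ), k < N → ∀ z ∈ closedBall (0:ℂ) 1,
      r k z ∈ Complex.slitPlane ∧ r k z ≠ 0 := by
    intro k hk z hz
    have h2 : (((k:ℝ))/N : ℝ) • z ∈ closedBall (0:ℂ) 1 := hmem k hk.le z hz
    have h1 : ((((k:ℕ)+1):ℝ)/N : ℝ) • z ∈ closedBall (0:ℂ) 1 := by
      have := hmem (k+1) hk z hz; push_cast at this ⊢; exact this
    have hd2 : M ((((k:ℝ))/N : ℝ) • z) ≠ 0 := h0 _ h2
    have hd1 : M (((((k:ℕ)+1):ℝ)/N : ℝ) • z) ≠ 0 := h0 _ h1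
    have hlt : ‖r k z - 1‖ < 1 := by
      rw [hr]
      have : M ((((k:ℕ)+1:ℝ)/N : ℝ) • z) / M (((k:ℝ)/N : ℝ) • z) - 1
          = (M ((((k:ℕ)+1:ℝ)/N : ℝ) • z) - M (((k:ℝ)/N : ℝ) • z)) / M (((k:ℝ)/N : ℝ) • z) := by
        rw [div_sub_one hd2]
      rw [this, norm_div, div_lt_one (norm_pos_iff.2 hd2)]
      calc ‖M ((((k:ℕ)+1:ℝ)/N : ℝ) • z) - M (((k:ℝ)/N : ℝ) • z)‖
          = dist (M ((((k:ℕ)+1:ℝ)/N : ℝ) • z)) (M (((k:ℝ)/N : ℝ) • z)) := (dist_eq_norm _ _).symm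
        _ < ε := hclose k hk z hz
        _ ≤ ‖M (((k:ℝ)/N : ℝ) • z)‖ := hmin h2
    constructor
    · rw [Complex.mem_slitPlane_iff]
      left
      have := Complex.abs_re_le_norm (r k z - 1)
      have h3 : |((r k z).re - 1)| < 1 := by
        calc |((r k z).re - 1)| = |(r k z - 1).re| := by simp
          _ ≤ ‖(r k z - 1)‖ := Complex.abs_re_le_norm _
          _ < 1 := hlt
      have := abs_lt.1 h3
      linarith [this.1]
    · rw [hr]; exact div_ne_zero hd1 hd2
  refine ⟨fun z => Complex.log (M 0) + ∑ k ∈ Finset.range N, Complex.log (r k z), ?_, ?_⟩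
  · apply ContinuousOn.add continuousOn_const
    apply continuousOn_finset_sum
    intro k hk
    rw [Finset.mem_range] at hk
    intro z hz
    have hcw : ContinuousWithinAt (r k) (closedBall (0:ℂ) 1) z := by
      apply ContinuousWithinAt.div
      · exact (hM _ (by have := hmem (k+1) hk z hz; push_cast at this ⊢; exact this)).comp
          ((continuous_const_smul _).continuousWithinAt)
          (fun w hw => by have := hmem (k+1) hk w hw; push_cast at this ⊢; exact this)
      · exact (hM _ (hmem k hk.le z hz)).comp
          ((continuous_const_smul _).continuousWithinAt)
          (fun w hw => hmem k hk.le w hw)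
      · exact h0 _ (hmem k hk.le z hz)
    exact (continuousAt_clog (hrslit k hk z hz).1).comp_continuousWithinAt hcw
  · intro z hz
    rw [Complex.exp_add, Complex.exp_sum]
    have : ∀ k ∈ Finset.range N, Complex.exp (Complex.log (r k z)) = r k z := by
      intro k hk
      exact Complex.exp_log (hrslit k (Finset.mem_range.1 hk) z hz).2
    rw [Finset.prod_congr rfl this]
    have htel : ∏ k ∈ Finset.range N, r k z = M z / M 0 := by
      have h := prod_telescope (fun k => M (((k:ℝ)/N : ℝ) • z)) N
        (fun k hk => h0 _ (hmem k hk z hz))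
      simp only [Nat.cast_add, Nat.cast_one, Nat.cast_zero, zero_div, zero_smul] at h
      rw [div_self (ne_of_gt hNpos), one_smul] at h
      rw [hr]
      exact h
    rw [htel, Complex.exp_log (h0 0 (by simp))]
    rw [mul_div_assoc']
    exact mul_div_cancel_left₀ _ (h0 0 (by simp))

lemma exists_zero_of_boundary (M : ℂ → ℂ) (hM : ContinuousOn M (closedBall (0:ℂ) 1))
    (c : ℂ) (hc : c ≠ 0) (hbd : ∀ a : ℂ, ‖a‖ = 1 → M a = c * a) :
    ∃ z ∈ closedBall (0:ℂ) 1, M z = 0 := by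
  by_contra hcon
  push_neg at hcon
  obtain ⟨L, hLcont, hLexp⟩ := exists_cont_log M hM hcon
  set ψ : ℝ → ℂ := fun θ => L (Complex.exp (θ * Complex.I)) - θ * Complex.I with hψ
  have hcirc : ∀ θ : ℝ, Complex.exp ((θ:ℂ) * Complex.I) ∈ closedBall (0:ℂ) 1 := by
    intro θ
    simp [mem_closedBall, Complex.dist_eq, Complex.norm_exp_ofReal_mul_I]
  have hψcont : Continuous ψ := by
    apply Continuous.sub
    · apply hLcont.comp_continuous
      · exact Complex.continuous_exp.comp ((Complex.continuous_ofReal.mul continuous_const))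
      · exact hcirc
    · exact Complex.continuous_ofReal.mul continuous_const
  have hψexp : ∀ θ : ℝ, Complex.exp (ψ θ) = c := by
    intro θ
    rw [hψ]
    simp only
    rw [Complex.exp_sub, hLexp _ (hcirc θ), hbd _ (Complex.norm_exp_ofReal_mul_I θ)]
    rw [mul_div_assoc, div_self (Complex.exp_ne_zero _), mul_one]
  have hS : {θ : ℝ | ψ θ = ψ 0} = univ := by
    apply IsClopen.eq_univ
    · constructor
      · exact isClosed_eq hψcont continuous_const
      · rw [isOpen_iff_mem_nhds]
        intro θ₀ hθ₀
        have h1 : ∀ᶠ θ in nhds θ₀, ‖ψ θ - ψ θ₀‖ < 2 * Real.pi := by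
          have := (hψcont.tendsto θ₀).sub_const (ψ θ₀)
          have h2 : (0:ℝ) < 2 * Real.pi := by positivity
          have := Metric.tendsto_nhds.1 this (2 * Real.pi) h2
          simpa [dist_eq_norm] using this
        filter_upwards [h1] with θ hθ
        have hee : Complex.exp (ψ θ) = Complex.exp (ψ θ₀) := by
          rw [hψexp, hψexp]
        obtain ⟨m, hm⟩ := Complex.exp_eq_exp_iff_exists_int.1 hee
        have hθ₀' : ψ θ₀ = ψ 0 := hθ₀
        have hnorm : ‖(m:ℂ) * (2 * Real.pi * Complex.I)‖ < 2 * Real.pi := by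
          have heq : (m:ℂ) * (2 * Real.pi * Complex.I) = ψ θ - ψ θ₀ := by
            rw [hm]; ring
          rw [heq]
          exact hθ
        have : |(m:ℝ)| * (2 * Real.pi) < 2 * Real.pi := by
          rw [norm_mul] at hnorm
          simpa [Complex.norm_exp_ofReal_mul_I, abs_of_nonneg Real.pi_pos.le,
            Complex.norm_intCast, Complex.norm_I, Complex.norm_two, Complex.norm_real] using hnorm
        have hm0 : m = 0 := by
          by_contra hm0
          have : (1:ℝ) ≤ |(m:ℝ)| := by
            rw [← Int.cast_abs]
            exact_mod_cast Int.one_le_abs (by exact_mod_cast hm0)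
          nlinarith [Real.pi_pos]
        rw [hm0] at hm
        simp at hm
        show ψ θ = ψ 0
        rw [hm, hθ₀']
    · exact ⟨0, rfl⟩
  have h2π : ψ (2 * Real.pi) = ψ 0 := by
    have := hS ▸ mem_univ (2 * Real.pi)
    exact this
  rw [hψ] at h2π
  simp only at h2π
  have he1 : Complex.exp (((2 * Real.pi : ℝ) : ℂ) * Complex.I) = 1 := by
    push_cast
    exact Complex.exp_two_pi_mul_I
  have he0 : Complex.exp (((0:ℝ):ℂ) * Complex.I) = 1 := by simp
  rw [he1, he0] at h2π
  have : ((2 * Real.pi : ℝ) : ℂ) * Complex.I = 0 := by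
    have := sub_eq_sub_iff_sub_eq_sub.1 h2π
    simp at h2π ⊢
  simp [Complex.I_ne_zero] at this



/-- Center of mass lemma. If `Ω` is a bounded open subset of `ℂ`
that is the image of the unit disk under an injective holomorphic map, `g` is
continuous on `[0,1]` with `g 0 = 0 < g 1`, `H z = g |z| · z / |z|` (and
`H 0 = 0`), and `v₁` is integrable on `Ω` with positive integral, then there is
an injective holomorphic `f : 𝔻 → ℂ` onto `Ω` such that `H ∘ f⁻¹` is
orthogonal to `v₁` (as a complex-valued identity). -/
theorem center_of_mass
    (Ω : Set ℂ) (hΩopen : IsOpen Ω) (hΩbdd : Bornology.IsBounded Ω)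
    (F : ℂ → ℂ) (hFhol : DifferentiableOn ℂ F (ball (0:ℂ) 1))
    (hFinj : InjOn F (ball (0:ℂ) 1)) (hFim : F '' (ball (0:ℂ) 1) = Ω)
    (g : ℝ → ℝ) (hg : ContinuousOn g (Icc (0:ℝ) 1))
    (hg0 : g 0 = 0) (hg1 : 0 < g 1)
    (H : ℂ → ℂ)
    (hH : ∀ z : ℂ, z ≠ 0 → H z = (g (‖z‖) : ℂ) * z / (‖z‖ : ℂ))
    (hH0 : H 0 = 0)
    (v₁ : ℂ → ℝ) (hv₁ : IntegrableOn v₁ Ω volume)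
    (hv₁pos : 0 < ∫ x in Ω, v₁ x) :
    ∃ f : ℂ → ℂ, DifferentiableOn ℂ f (ball (0:ℂ) 1) ∧
      InjOn f (ball (0:ℂ) 1) ∧ f '' (ball (0:ℂ) 1) = Ω ∧
      ∫ x in Ω, (v₁ x : ℂ) * H (Function.invFunOn f (ball (0:ℂ) 1) x) = 0 := by
  set s : Set ℂ := ball (0:ℂ) 1 with hsdef
  have hmb : ∀ z : ℂ, z ∈ s ↔ ‖z‖ < 1 := by
    intro z; simp [hsdef, mem_ball, Complex.dist_eq]
  have hmcb : ∀ z : ℂ, z ∈ closedBall (0:ℂ) 1 ↔ ‖z‖ ≤ 1 := by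
    intro z; simp [mem_closedBall, Complex.dist_eq]
  have hs : MeasurableSet s := measurableSet_ball
  -- derivative data
  set A : ℂ → ℂ →L[ℝ] ℂ := fun w => (fderiv ℂ F w).restrictScalars ℝ with hA
  have hAder : ∀ w ∈ s, HasFDerivWithinAt F (A w) s w := by
    intro w hw
    exact ((hFhol.differentiableAt (isOpen_ball.mem_nhds hw)).hasFDerivAt.restrictScalars
      ℝ).hasFDerivWithinAt
  -- change of variables
  have hCOV : ∀ {E : Type} [NormedAddCommGroup E] [NormedSpace ℝ E] (φ : ℂ → E),
      ∫ x in Ω, φ x = ∫ w in s, |(A w).det| • φ (F w) := by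
    intro E _ _ φ
    rw [← hFim]
    exact integral_image_eq_integral_abs_det_fderiv_smul volume hs hAder hFinj φ
  set ρ : ℂ → ℝ := fun w => |(A w).det| * v₁ (F w) with hρ
  have hρint : IntegrableOn ρ s volume := by
    have h1 := (integrableOn_image_iff_integrableOn_abs_det_fderiv_smul volume hs hAder
      hFinj v₁).1 (hFim ▸ hv₁)
    simpa [hρ, smul_eq_mul] using h1
  have hρpos : 0 < ∫ w in s, ρ w := by
    have h1 := hCOV v₁
    simp only [smul_eq_mul] at h1
    rw [← hρ] at h1  -- may fail; fallback below
    rw [← h1]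
    exact hv₁pos
  -- bound for H
  have hHcont : ContinuousOn H (closedBall (0:ℂ) 1) := H_contOn g H hg hg0 hH hH0
  obtain ⟨C, hC⟩ := (isCompact_closedBall (0:ℂ) 1).exists_bound_of_continuousOn hHcont
  have hC0 : 0 ≤ C := le_trans (norm_nonneg _) (hC 0 (by simp))
  -- continuity of Phi in w, membership facts
  have hPhiMem : ∀ a ∈ closedBall (0:ℂ) 1, ∀ w ∈ s, Phi a w ∈ closedBall (0:ℂ) 1 := by
    intro a ha w hw
    exact (hmcb _).2 (phi_abs_le a w ((hmcb a).1 ha) ((hmb w).1 hw))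
  have hPhiContW : ∀ a ∈ closedBall (0:ℂ) 1, ContinuousOn (fun w => H (Phi a w)) s := by
    intro a ha
    apply hHcont.comp
    · apply ContinuousOn.div
      · exact (continuous_id.sub continuous_const).continuousOn
      · exact (continuous_const.sub (continuous_const.mul continuous_id)).continuousOn
      · intro w hw
        exact den_ne a w ((hmcb a).1 ha) ((hmb w).1 hw)
    · intro w hw
      exact hPhiMem a ha w hw
  -- integrability of the integrand
  have hbound : IntegrableOn (fun w => |ρ w| * C) s volume := hρint.abs.mul_const C
  have hnormle : ∀ a ∈ closedBall (0:ℂ) 1, ∀ w ∈ s,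
      ‖ρ w • H (Phi a w)‖ ≤ |ρ w| * C := by
    intro a ha w hw
    rw [norm_smul, Real.norm_eq_abs]
    exact mul_le_mul_of_nonneg_left (hC _ (hPhiMem a ha w hw)) (abs_nonneg _)
  have haesm : ∀ a ∈ closedBall (0:ℂ) 1,
      AEStronglyMeasurable (fun w => ρ w • H (Phi a w)) (volume.restrict s) := by
    intro a ha
    exact hρint.aestronglyMeasurable.smul ((hPhiContW a ha).aestronglyMeasurable hs)
  have hMint : ∀ a ∈ closedBall (0:ℂ) 1,
      Integrable (fun w => ρ w • H (Phi a w)) (volume.restrict s) := by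
    intro a ha
    apply Integrable.mono' hbound (haesm a ha)
    rw [ae_restrict_iff' hs]
    exact Filter.Eventually.of_forall (fun w hw => hnormle a ha w hw)
  set Mf : ℂ → ℂ := fun a => ∫ w in s, ρ w • H (Phi a w) with hMf
  -- continuity of Mf
  have hMcont : ContinuousOn Mf (closedBall (0:ℂ) 1) := by
    intro a₀ ha₀
    apply continuousWithinAt_of_dominated
      (bound := fun w => |ρ w| * C)
    · filter_upwards [self_mem_nhdsWithin] with a ha
      exact haesm a ha
    · filter_upwards [self_mem_nhdsWithin] with a ha
      rw [ae_restrict_iff' hs]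
      exact Filter.Eventually.of_forall (fun w hw => hnormle a ha w hw)
    · exact hbound
    · rw [ae_restrict_iff' hs]
      apply Filter.Eventually.of_forall
      intro w hw
      have hwlt := (hmb w).1 hw
      have hphict : ContinuousWithinAt (fun a => Phi a w) (closedBall (0:ℂ) 1) a₀ := by
        apply ContinuousWithinAt.div
        · exact (continuous_const.sub continuous_id).continuousWithinAt
        · exact (continuous_const.sub ((Complex.continuous_conj.mul
            continuous_const))).continuousWithinAt
        · exact den_ne a₀ w ((hmcb a₀).1 ha₀) hwlt
      refine ContinuousWithinAt.smul (f := fun _ : ℂ => ρ w) continuousWithinAt_const ?_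
      exact ContinuousWithinAt.comp (g := H) (f := fun a => Phi a w)
        (hHcont _ (hPhiMem a₀ ha₀ w hw)) hphict (fun a ha => hPhiMem a ha w hw)
  -- boundary values
  set c : ℂ := ((∫ w in s, ρ w : ℝ) : ℂ) * (-(g 1 : ℂ)) with hc
  have hcne : c ≠ 0 := by
    rw [hc]
    apply mul_ne_zero
    · exact_mod_cast ne_of_gt hρpos
    · simp only [ne_eq, neg_eq_zero]
      exact_mod_cast ne_of_gt hg1
  have hbdval : ∀ a : ℂ, ‖a‖ = 1 → Mf a = c * a := by
    intro a ha
    have h1 : ∀ w ∈ s, ρ w • H (Phi a w) = ρ w • (((g 1 : ℝ)) : ℂ) • (-a) := by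
      intro w hw
      rw [phi_boundary a w ha ((hmb w).1 hw)]
      congr 1
      have hane : (-a : ℂ) ≠ 0 := by
        intro h0; rw [neg_eq_zero] at h0; rw [h0] at ha; simp at ha
      rw [hH _ hane]
      rw [norm_neg, ha]
      push_cast
      simp [Complex.real_smul]
    rw [hMf]
    simp only
    rw [setIntegral_congr_fun hs h1]
    have h2 : ∀ w : ℂ, ρ w • ((g 1 : ℝ) : ℂ) • (-a) = (ρ w * g 1) • (-a) := by
      intro w
      rw [smul_eq_mul, Complex.real_smul, Complex.real_smul]
      push_cast
      ring
    simp_rw [h2]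
    rw [integral_smul_const]
    rw [hc]
    have h3 : ∫ w in s, ρ w * g 1 = (∫ w in s, ρ w) * g 1 := by
      exact integral_mul_const _ _
    rw [h3]
    push_cast [Complex.real_smul]
    ring
  -- find the zero
  obtain ⟨a₁, ha₁cb, ha₁zero⟩ := exists_zero_of_boundary Mf hMcont c hcne hbdval
  have ha₁ : ‖a₁‖ < 1 := by
    rcases lt_or_eq_of_le ((hmcb a₁).1 ha₁cb) with h | h
    · exact h
    · exfalso
      apply hcne
      have := hbdval a₁ h
      rw [ha₁zero] at this
      have ha₁ne : a₁ ≠ 0 := by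
        intro h0; rw [h0] at h; simp at h
      replace this := mul_eq_zero.1 this.symm
      rcases this with h' | h'
      · exact h'
      · exact absurd h' ha₁ne
  have ha₁s : a₁ ∈ s := (hmb a₁).2 ha₁
  have hna₁s : -a₁ ∈ s := (hmb _).2 (by simpa using ha₁)
  -- the map f
  set f : ℂ → ℂ := fun z => F (Phi (-a₁) z) with hf
  have hPhiMapsTo : ∀ z ∈ s, Phi (-a₁) z ∈ s := by
    intro z hz
    exact (hmb _).2 (phi_abs_lt (-a₁) z ((hmb _).1 hna₁s) ((hmb z).1 hz))
  have hPhiMapsTo' : ∀ z ∈ s, Phi a₁ z ∈ s := by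
    intro z hz
    exact (hmb _).2 (phi_abs_lt a₁ z ha₁ ((hmb z).1 hz))
  have hcomp1 : ∀ z ∈ s, Phi a₁ (Phi (-a₁) z) = z := by
    intro z hz
    exact phi_comp a₁ z ha₁ ((hmb z).1 hz)
  have hcomp2 : ∀ z ∈ s, Phi (-a₁) (Phi a₁ z) = z := by
    intro z hz
    have := phi_comp (-a₁) z (by simpa using ha₁) ((hmb z).1 hz)
    rwa [neg_neg] at this
  have hPhiImage : Phi (-a₁) '' s = s := by
    apply Subset.antisymm
    · rintro _ ⟨z, hz, rfl⟩
      exact hPhiMapsTo z hz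
    · intro z hz
      exact ⟨Phi a₁ z, hPhiMapsTo' z hz, hcomp2 z hz⟩
  have hfinj : InjOn f s := by
    intro x hx y hy hxy
    have h1 : Phi (-a₁) x = Phi (-a₁) y :=
      hFinj (hPhiMapsTo x hx) (hPhiMapsTo y hy) hxy
    have h2 := hcomp1 x hx
    have h3 := hcomp1 y hy
    rw [← h2, ← h3, h1]
  have hfim : f '' s = Ω := by
    rw [hf]
    rw [show (fun z => F (Phi (-a₁) z)) = F ∘ (Phi (-a₁)) from rfl]
    rw [image_comp, hPhiImage, hFim]
  have hfdiff : DifferentiableOn ℂ f s := by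
    apply DifferentiableOn.comp hFhol _ hPhiMapsTo
    apply DifferentiableOn.div
    · exact (differentiable_id.sub_const _).differentiableOn
    · exact (differentiable_const _).differentiableOn.sub
        (((differentiable_const _).mul differentiable_id).differentiableOn)
    · intro z hz
      exact den_ne (-a₁) z (by simpa using ha₁.le) ((hmb z).1 hz)
  refine ⟨f, hfdiff, hfinj, hfim, ?_⟩
  -- the integral identity
  have hinvf : ∀ x ∈ Ω, Function.invFunOn f s x = Phi a₁ (Function.invFunOn F s x) := by
    intro x hx
    have hex : ∃ w ∈ s, F w = x := by
      rw [← hFim] at hx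
      obtain ⟨w, hw, hFw⟩ := hx
      exact ⟨w, hw, hFw⟩
    have humem : Function.invFunOn F s x ∈ s := Function.invFunOn_mem hex
    have huF : F (Function.invFunOn F s x) = x := Function.invFunOn_eq hex
    have hymem : Phi a₁ (Function.invFunOn F s x) ∈ s := hPhiMapsTo' _ humem
    have hfy : f (Phi a₁ (Function.invFunOn F s x)) = x := by
      rw [hf]
      simp only
      rw [hcomp2 _ humem, huF]
    have hex' : ∃ w ∈ s, f w = x := ⟨_, hymem, hfy⟩
    apply hfinj (Function.invFunOn_mem hex') hymem
    rw [Function.invFunOn_eq hex', hfy]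
  calc ∫ x in Ω, (v₁ x : ℂ) * H (Function.invFunOn f s x)
      = ∫ x in Ω, (v₁ x : ℂ) * H (Phi a₁ (Function.invFunOn F s x)) := by
        apply setIntegral_congr_fun hΩopen.measurableSet
        intro x hx
        dsimp only
        rw [hinvf x hx]
    _ = ∫ w in s, |(A w).det| • ((v₁ (F w) : ℂ) * H (Phi a₁ (Function.invFunOn F s (F w)))) :=
        hCOV _
    _ = ∫ w in s, ρ w • H (Phi a₁ w) := by
        apply setIntegral_congr_fun hs
        intro w hw
        dsimp only
        rw [hFinj.leftInvOn_invFunOn hw]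
        rw [hρ]
        dsimp only
        rw [mul_smul]
        congr 1
    _ = Mf a₁ := rfl
    _ = 0 := ha₁zero
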